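/- Let p be a prime and 2 ≤ k < p. The array with p^k rows indexed by polynomials f = a_0 + a_1 X + ... + a_(k−1) X^(k−1) over F_p and with p+1 columns given by (a_(k−1), f(0), f(1), ..., f(p−1)) is an orthogonal array OA(p^k, p+1, p, k) of index unity. -/
import Mathlib


/-- Bush's extended Reed–Solomon row: the coefficients `a` of a polynomial
`f = a 0 + a 1 * X + ... + a (k-1) * X^(k-1)` over `ZMod p` determine a row of
length `p + 1`: the columns `c < p` carry the value `f(c)`, while the last
column carries the leading coefficient `a (k-1)`. -/
def bushRow (p k : ℕ) (a : Fin k → ZMod p) (c : Fin (p + 1)) : ZMod p :=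
  if (c : ℕ) < p then ∑ i : Fin k, a i * ((c : ℕ) : ZMod p) ^ (i : ℕ)
  else if h : 0 < k then a ⟨k - 1, Nat.sub_lt h one_pos⟩ else 0

open Polynomial in
theorem stmt_7 (p k : ℕ) (hp : p.Prime) (hk : 2 ≤ k) (hkp : k < p) :
    ∀ S : Finset (Fin (p + 1)), S.card = k → ∀ t : Fin (p + 1) → ZMod p,
      ∃! a : Fin k → ZMod p, ∀ c ∈ S, bushRow p k a c = t c := by
  classical
  intro S hS t
  have hk0 : 0 < k := by omega
  haveI : Fact p.Prime := ⟨hp⟩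
  haveI : NeZero p := ⟨hp.pos.ne'⟩
  set φ : (Fin k → ZMod p) → (S → ZMod p) := fun a c => bushRow p k a (c : Fin (p+1)) with hφ
  have hinj : Function.Injective φ := by
    intro a b hab
    set Q : (ZMod p)[X] := ∑ i : Fin k, C (a i - b i) * X ^ (i : ℕ) with hQdef
    have hcoeff : ∀ i : Fin k, Q.coeff (i : ℕ) = a i - b i := by
      intro i
      rw [hQdef, Polynomial.finset_sum_coeff, Finset.sum_eq_single i]
      · rw [coeff_C_mul, coeff_X_pow, if_pos rfl, mul_one]
      · intro j _ hji
        rw [coeff_C_mul, coeff_X_pow, if_neg, mul_zero]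
        exact fun h => hji ((Fin.ext h).symm)
      · simp
    have hdeg : Q.natDegree ≤ k - 1 := by
      apply Polynomial.natDegree_sum_le_of_forall_le
      intro i _
      exact (natDegree_C_mul_le _ _).trans (by simpa using (by omega : (i:ℕ) ≤ k - 1))
    have heval : ∀ x : ZMod p,
        Q.eval x = (∑ i : Fin k, a i * x ^ (i:ℕ)) - (∑ i : Fin k, b i * x ^ (i:ℕ)) := by
      intro x
      rw [← Finset.sum_sub_distrib]
      rw [hQdef, Polynomial.eval_finset_sum]
      refine Finset.sum_congr rfl fun i _ => ?_
      simp [sub_mul]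
    -- evaluation points in S with value < p are roots of Q
    have hroot : ∀ c : Fin (p+1), c ∈ S → (c : ℕ) < p → Q.eval (((c:ℕ) : ZMod p)) = 0 := by
      intro c hc hcp
      have := congrFun hab ⟨c, hc⟩
      simp only [hφ, bushRow, if_pos hcp] at this
      rw [heval, this, sub_self]
    have hptinj : ∀ c ∈ S, ∀ d ∈ S, (c:ℕ) < p → (d:ℕ) < p →
        (((c:ℕ) : ZMod p) = ((d:ℕ) : ZMod p)) → c = d := by
      intro c _ d _ hc hd h
      have := congrArg ZMod.val h
      rw [ZMod.val_cast_of_lt hc, ZMod.val_cast_of_lt hd] at this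
      exact Fin.ext this
    set L : Fin (p+1) := ⟨p, Nat.lt_succ_self p⟩ with hL
    have hlt : ∀ c : Fin (p+1), c ≠ L → (c : ℕ) < p := by
      intro c hc
      rcases Nat.lt_succ_iff_lt_or_eq.mp c.isLt with h | h
      · exact h
      · exact absurd (Fin.ext (by simp [hL, h])) hc
    have hQ0 : Q = 0 := by
      by_cases hLS : L ∈ S
      · -- last column in S: leading coefficient agrees, so deg < k-1
        have hlead : a ⟨k-1, Nat.sub_lt hk0 one_pos⟩ = b ⟨k-1, Nat.sub_lt hk0 one_pos⟩ := by
          have := congrFun hab ⟨L, hLS⟩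
          simpa [hφ, bushRow, hL, hk0] using this
        have hck : Q.coeff (k-1) = 0 := by
          have := hcoeff ⟨k-1, Nat.sub_lt hk0 one_pos⟩
          simp only [hlead, sub_self] at this
          exact this
        by_contra hQne
        have hdeg' : Q.natDegree < k - 1 := by
          rcases lt_or_eq_of_le hdeg with h | h
          · exact h
          · exact absurd (by rw [Polynomial.leadingCoeff, h]; exact hck)
              (Polynomial.leadingCoeff_ne_zero.mpr hQne)
        refine hQne ?_
        refine Polynomial.eq_zero_of_natDegree_lt_card_of_eval_eq_zero Q
          (f := fun c : (S.erase L) => (((c : Fin (p+1)) : ℕ) : ZMod p)) ?_ ?_ ?_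
        · intro c d h
          have hc : ((c : Fin (p+1)) : ℕ) < p := hlt _ (Finset.ne_of_mem_erase c.2)
          have hd : ((d : Fin (p+1)) : ℕ) < p := hlt _ (Finset.ne_of_mem_erase d.2)
          exact Subtype.ext (hptinj _ (Finset.mem_of_mem_erase c.2) _
            (Finset.mem_of_mem_erase d.2) hc hd h)
        · intro c
          have hc : ((c : Fin (p+1)) : ℕ) < p := hlt _ (Finset.ne_of_mem_erase c.2)
          exact hroot _ (Finset.mem_of_mem_erase c.2) hc
        · rw [Fintype.card_coe, Finset.card_erase_of_mem hLS, hS]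
          exact hdeg'
      · -- last column not in S: all points are evaluation points
        refine Polynomial.eq_zero_of_natDegree_lt_card_of_eval_eq_zero Q
          (f := fun c : S => (((c : Fin (p+1)) : ℕ) : ZMod p)) ?_ ?_ ?_
        · intro c d h
          have hc : ((c : Fin (p+1)) : ℕ) < p := hlt _ (fun h => hLS (h ▸ c.2))
          have hd : ((d : Fin (p+1)) : ℕ) < p := hlt _ (fun h => hLS (h ▸ d.2))
          exact Subtype.ext (hptinj _ c.2 _ d.2 hc hd h)
        · intro c
          have hc : ((c : Fin (p+1)) : ℕ) < p := hlt _ (fun h => hLS (h ▸ c.2))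
          exact hroot _ c.2 hc
        · rw [Fintype.card_coe, hS]
          omega
    funext i
    have := hcoeff i
    rw [hQ0] at this
    simp only [Polynomial.coeff_zero] at this
    exact sub_eq_zero.mp this.symm
  have hcard : Fintype.card (Fin k → ZMod p) = Fintype.card (S → ZMod p) := by
    simp [Fintype.card_fun, ZMod.card, hS]
  have hbij : Function.Bijective φ :=
    (Fintype.bijective_iff_injective_and_card φ).2 ⟨hinj, hcard⟩
  obtain ⟨a, ha, hu⟩ := hbij.existsUnique (fun c : S => t c)
  refine ⟨a, fun c hc => congrFun ha ⟨c, hc⟩, fun b hb => hu b (funext fun c => hb c c.2)⟩
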